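/- Every semicommutative ring is almost Armendariz. -/

import Mathlib

/-- An element `a` of a ring `R` is *strongly nilpotent* if every sequence
`a₀ = a`, `aₙ₊₁ ∈ aₙ R aₙ` is eventually zero. -/
def IsStronglyNilpotent {R : Type*} [Ring R] (a : R) : Prop :=
  ∀ s : ℕ → R, s 0 = a → (∀ n : ℕ, ∃ r : R, s (n + 1) = s n * r * s n) → ∃ n : ℕ, s n = 0

/-- The prime radical `P(R)` of a ring `R`: the intersection of all prime two-sided
ideals of `R`, equivalently the set of strongly nilpotent elements of `R`. -/
def primeRadical (R : Type*) [Ring R] : Set R :=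
  {a : R | IsStronglyNilpotent a}

/-- A ring `R` is *almost Armendariz* if whenever `f, g ∈ R[x]` satisfy `f g = 0`, every
product of a coefficient of `f` with a coefficient of `g` lies in the prime radical `P(R)`. -/
def IsAlmostArmendariz (R : Type*) [Ring R] : Prop :=
  ∀ f g : Polynomial R, f * g = 0 → ∀ i j : ℕ, f.coeff i * g.coeff j ∈ primeRadical R

section Aux

variable {R : Type*} [Ring R]

/-- Interleaving lemma: in a semicommutative ring, if `c * a ^ n = 0` then we may insert
arbitrary ring elements between the copies of `a`. -/
private lemma aux_insL (hsc : ∀ a b : R, a * b = 0 → ∀ r : R, a * r * b = 0) (a : R) :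
    ∀ (ts : List R) (c : R), c * a ^ ts.length = 0 →
      c * (ts.map (fun t => t * a)).prod = 0 := by
  intro ts
  induction ts with
  | nil => intro c hc; simpa using hc
  | cons t ts ih =>
      intro c hc
      have h1 : c * t * a ^ (ts.length + 1) = 0 := hsc _ _ (by simpa using hc) t
      have h2 : c * (t * a) * a ^ ts.length = 0 := by
        rw [pow_succ'] at h1
        simpa [mul_assoc] using h1
      have h3 := ih _ h2
      simpa [mul_assoc] using h3

private lemma aux_sq_step (hsc : ∀ a b : R, a * b = 0 → ∀ r : R, a * r * b = 0) (y r : R) :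
    ∀ (k : ℕ) (c : R), c * y ^ (2 * k) = 0 → c * (y * r * y) ^ k = 0 := by
  intro k
  induction k with
  | zero => intro c hc; simpa using hc
  | succ k ih =>
      intro c hc
      have h1 : (c * y) * (y * y ^ (2 * k)) = 0 := by
        have h2 : 2 * (k + 1) = 1 + (1 + 2 * k) := by ring
        rw [h2, pow_add, pow_add, pow_one] at hc
        simpa [mul_assoc] using hc
      have h2 := hsc _ _ h1 r
      have h3 : (c * (y * r * y)) * y ^ (2 * k) = 0 := by simpa [mul_assoc] using h2
      have h4 := ih _ h3
      rw [pow_succ']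
      simpa [mul_assoc] using h4

private lemma aux_strongly_nilpotent (hsc : ∀ a b : R, a * b = 0 → ∀ r : R, a * r * b = 0)
    {x : R} {m : ℕ} (hm : x ^ m = 0) : IsStronglyNilpotent x := by
  intro s hs0 hstep
  have key : ∀ n k, m ≤ 2 ^ n * k → s n ^ k = 0 := by
    intro n
    induction n with
    | zero =>
        intro k hk
        have hk' : m ≤ k := by simpa using hk
        obtain ⟨d, rfl⟩ : ∃ d, k = m + d := ⟨k - m, by omega⟩
        rw [hs0, pow_add, hm, zero_mul]
    | succ n ih =>
        intro k hk
        obtain ⟨r, hr⟩ := hstep n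
        have h2 : s n ^ (2 * k) = 0 := ih (2 * k) (by rw [pow_succ, mul_assoc] at hk; exact hk)
        have h3 := aux_sq_step hsc (s n) r k 1 (by simpa using h2)
        rw [hr]
        simpa using h3
  refine ⟨m, ?_⟩
  have := key m 1 (by simpa using (Nat.lt_two_pow_self (n := m)).le)
  simpa using this

private lemma aux_nil_mul_left (hsc : ∀ a b : R, a * b = 0 → ∀ r : R, a * r * b = 0)
    {a : R} (ha : IsNilpotent a) (r : R) : IsNilpotent (r * a) := by
  obtain ⟨n, hn⟩ := ha
  refine ⟨n, ?_⟩
  have h := aux_insL hsc a (List.replicate n r) 1 (by simpa using hn)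
  simpa [List.map_replicate, List.prod_replicate] using h

private lemma aux_mul_pow_expand (a r : R) : ∀ n : ℕ, (a * r) ^ (n + 1) = a * ((r * a) ^ n * r)
  | 0 => by simp
  | n + 1 => by
      rw [pow_succ, aux_mul_pow_expand a r n, pow_succ]
      simp [mul_assoc]

private lemma aux_nil_mul_right (hsc : ∀ a b : R, a * b = 0 → ∀ r : R, a * r * b = 0)
    {a : R} (ha : IsNilpotent a) (r : R) : IsNilpotent (a * r) := by
  obtain ⟨n, hn⟩ := ha
  refine ⟨n + 1, ?_⟩
  have h1 : (r * a) ^ n = 0 := by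
    have h := aux_insL hsc a (List.replicate n r) 1 (by simpa using hn)
    simpa [List.map_replicate, List.prod_replicate] using h
  rw [aux_mul_pow_expand, h1, zero_mul, mul_zero]

/-- Decomposition: if the letter `v` occurs at least `n` times in the word `l`, then the
product of the word can be written with a prefix which is a product of `n` factors each of
which ends in `f v`. -/
private lemma aux_word_split (f : Bool → R) (v : Bool) :
    ∀ (l : List Bool) (n : ℕ), n ≤ l.count v →
      ∃ (us : List R) (w : R), us.length = n ∧
        (l.map f).prod = (us.map (fun u => u * f v)).prod * w := by
  intro l
  induction l with
  | nil =>
      intro n hn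
      have : n = 0 := by simpa using hn
      subst this
      exact ⟨[], 1, rfl, by simp⟩
  | cons x l ih =>
      intro n hn
      match n with
      | 0 => exact ⟨[], ((x :: l).map f).prod, rfl, by simp⟩
      | Nat.succ k =>
        by_cases hx : x = v
        · subst hx
          have hcount : k ≤ l.count x := by
            have := hn
            simp [List.count_cons] at this
            omega
          obtain ⟨us, w, hlen, hprod⟩ := ih k hcount
          refine ⟨1 :: us, w, by simp [hlen], ?_⟩
          simp [hprod, mul_assoc]
        · have hcount : k + 1 ≤ l.count v := by
            have := hn
            simp [List.count_cons, hx] at this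
            omega
          obtain ⟨us, w, hlen, hprod⟩ := ih (k + 1) hcount
          match us, hlen with
          | u :: us', hlen =>
            refine ⟨(f x * u) :: us', w, by simpa using hlen, ?_⟩
            simp [hprod, mul_assoc]

private lemma aux_word_kill (hsc : ∀ a b : R, a * b = 0 → ∀ r : R, a * r * b = 0)
    (f : Bool → R) (v : Bool) (n : ℕ) (hv : f v ^ n = 0) :
    ∀ (l : List Bool), n ≤ l.count v → (l.map f).prod = 0 := by
  intro l hl
  obtain ⟨us, w, hlen, hprod⟩ := aux_word_split f v l n hl
  have h0 : (1 : R) * (us.map (fun u => u * f v)).prod = 0 :=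
    aux_insL hsc (f v) us 1 (by rw [hlen]; simpa using hv)
  rw [one_mul] at h0
  rw [hprod, h0, zero_mul]

private lemma aux_count_length (l : List Bool) : l.count true + l.count false = l.length := by
  induction l with
  | nil => rfl
  | cons x l ih => cases x <;> simp [List.count_cons] <;> omega

private lemma aux_mem_closure_words (a b : R) :
    ∀ N : ℕ, (a + b) ^ N ∈ AddSubmonoid.closure
      {x : R | ∃ l : List Bool, l.length = N ∧ x = (l.map (fun c => if c then a else b)).prod} := by
  intro N
  induction N with
  | zero =>
      apply AddSubmonoid.subset_closure
      exact ⟨[], rfl, by simp⟩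
  | succ N ih =>
      rw [pow_succ]
      refine AddSubmonoid.closure_induction
        (motive := fun x _ => x * (a + b) ∈ AddSubmonoid.closure
          {x : R | ∃ l : List Bool, l.length = N + 1 ∧
            x = (l.map (fun c => if c then a else b)).prod}) ?_ ?_ ?_ ih
      · rintro x ⟨l, hlen, rfl⟩
        rw [mul_add]
        apply AddSubmonoid.add_mem
        · apply AddSubmonoid.subset_closure
          exact ⟨l ++ [true], by simp [hlen], by simp⟩
        · apply AddSubmonoid.subset_closure
          exact ⟨l ++ [false], by simp [hlen], by simp⟩
      · show (0 : R) * (a + b) ∈ _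
        rw [zero_mul]; exact AddSubmonoid.zero_mem _
      · intro x y _ _ hx hy
        show (x + y) * (a + b) ∈ _
        rw [add_mul]
        exact AddSubmonoid.add_mem _ hx hy

private lemma aux_nil_add (hsc : ∀ a b : R, a * b = 0 → ∀ r : R, a * r * b = 0)
    {a b : R} (ha : IsNilpotent a) (hb : IsNilpotent b) : IsNilpotent (a + b) := by
  obtain ⟨n, hn⟩ := ha
  obtain ⟨m, hm⟩ := hb
  refine ⟨n + m, ?_⟩
  have hmem := aux_mem_closure_words a b (n + m)
  have hsub : {x : R | ∃ l : List Bool, l.length = n + m ∧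
      x = (l.map (fun c => if c then a else b)).prod} ⊆ (⊥ : AddSubmonoid R) := by
    rintro x ⟨l, hlen, rfl⟩
    have hcount := aux_count_length l
    simp only [SetLike.mem_coe, AddSubmonoid.mem_bot]
    rcases Nat.le_or_le n (l.count true) with h | h
    · exact aux_word_kill hsc _ true n (by simpa using hn) l h
    · have h' : m ≤ l.count false := by omega
      exact aux_word_kill hsc _ false m (by simpa using hm) l h'
  have := (AddSubmonoid.closure_le.mpr hsub) hmem
  simpa using this

/-- The nilradical of a semicommutative ring as a two-sided ideal. -/
private def nilTwoSidedIdeal (hsc : ∀ a b : R, a * b = 0 → ∀ r : R, a * r * b = 0) :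
    TwoSidedIdeal R :=
  TwoSidedIdeal.mk' {x : R | IsNilpotent x}
    (IsNilpotent.zero)
    (fun hx hy => aux_nil_add hsc hx hy)
    (fun hx => hx.neg)
    (fun hy => aux_nil_mul_left hsc hy _)
    (fun hx => aux_nil_mul_right hsc hx _)

private lemma mem_nilTwoSidedIdeal (hsc : ∀ a b : R, a * b = 0 → ∀ r : R, a * r * b = 0)
    (x : R) : x ∈ nilTwoSidedIdeal hsc ↔ IsNilpotent x := by
  simp [nilTwoSidedIdeal]

private lemma nil_quotient_reduced (hsc : ∀ a b : R, a * b = 0 → ∀ r : R, a * r * b = 0) :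
    IsReduced ((nilTwoSidedIdeal hsc).ringCon).Quotient := by
  constructor
  intro x hx
  obtain ⟨n, hn⟩ := hx
  obtain ⟨a, rfl⟩ := Quot.exists_rep x
  set c := (nilTwoSidedIdeal hsc).ringCon
  have ha : (Quot.mk _ a : c.Quotient) = (a : c.Quotient) := rfl
  rw [ha] at hn ⊢
  have hn' : ((a ^ n : R) : c.Quotient) = ((0 : R) : c.Quotient) := by
    push_cast
    simpa using hn
  have h1 : c (a ^ n) 0 := c.eq.mp hn'
  have h2 : a ^ n ∈ nilTwoSidedIdeal hsc := by
    rw [TwoSidedIdeal.mem_iff]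
    exact h1
  have h3 : IsNilpotent (a ^ n) := (mem_nilTwoSidedIdeal hsc _).mp h2
  obtain ⟨k, hk⟩ := h3
  have h4 : IsNilpotent a := ⟨n * k, by rw [pow_mul]; exact hk⟩
  have h5 : a ∈ nilTwoSidedIdeal hsc := (mem_nilTwoSidedIdeal hsc _).mpr h4
  have h6 : c a 0 := (TwoSidedIdeal.mem_iff _ _).mp h5
  calc (a : c.Quotient) = ((0 : R) : c.Quotient) := c.eq.mpr h6
    _ = 0 := by push_cast; rfl

section Reduced

variable {Q : Type*} [Ring Q] [IsReduced Q]

private lemma red_comm_zero {a b : Q} (h : a * b = 0) : b * a = 0 := by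
  have h2 : (b * a) ^ 2 = 0 := by
    rw [sq, mul_assoc, ← mul_assoc a b, h, zero_mul, mul_zero]
  exact (IsNilpotent.eq_zero ⟨2, h2⟩)

private lemma red_semicomm {a b : Q} (h : a * b = 0) (c : Q) : a * c * b = 0 := by
  have hba : b * a = 0 := red_comm_zero h
  have h2 : (a * c * b) ^ 2 = 0 := by
    calc (a * c * b) ^ 2 = a * c * (b * a) * c * b := by rw [sq]; simp [mul_assoc]
      _ = 0 := by rw [hba]; simp
  exact (IsNilpotent.eq_zero ⟨2, h2⟩)

private lemma red_cancel {a b : Q} (h : a * b * b = 0) : a * b = 0 := by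
  have h1 : b * (a * b) = 0 := red_comm_zero h
  have h2 : (a * b) ^ 2 = 0 := by
    rw [sq, mul_assoc, h1, mul_zero]
  exact (IsNilpotent.eq_zero ⟨2, h2⟩)

private lemma reduced_armendariz (f g : Polynomial Q) (hfg : f * g = 0) (i j : ℕ) :
    f.coeff i * g.coeff j = 0 := by
  set a := fun i => f.coeff i with ha
  set b := fun j => g.coeff j with hb
  have main : ∀ k, ∀ i j, i + j = k → a i * b j = 0 := by
    intro k
    induction k using Nat.strong_induction_on with
    | _ k IH =>
      have hcoeff : ∑ i ∈ Finset.range (k + 1), a i * b (k - i) = 0 := by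
        have h := congrArg (fun p => Polynomial.coeff p k) hfg
        simpa [Polynomial.coeff_mul, Finset.Nat.sum_antidiagonal_eq_sum_range_succ_mk]
          using h
      have step : ∀ t, t ≤ k → (∑ i ∈ Finset.range (t + 1), a i * b (k - i)) = 0 →
          a t * b (k - t) = 0 ∧ (∑ i ∈ Finset.range t, a i * b (k - i)) = 0 := by
        intro t ht hT
        have hmul : (∑ i ∈ Finset.range (t + 1), a i * b (k - i)) * b (k - t) = 0 := by
          rw [hT, zero_mul]
        rw [Finset.sum_mul, Finset.sum_range_succ] at hmul
        have hz : ∀ i ∈ Finset.range t, a i * b (k - i) * b (k - t) = 0 := by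
          intro i hi
          have hi' : i < t := Finset.mem_range.mp hi
          have hib : a i * b (k - t) = 0 := IH (i + (k - t)) (by omega) i (k - t) rfl
          exact red_semicomm hib (b (k - i))
        rw [Finset.sum_eq_zero hz, zero_add] at hmul
        have h1 : a t * b (k - t) = 0 := red_cancel hmul
        refine ⟨h1, ?_⟩
        have hT' := hT
        rw [Finset.sum_range_succ, h1, add_zero] at hT'
        exact hT'
      have desc : ∀ d, d ≤ k →
          (∑ i ∈ Finset.range (k - d + 1), a i * b (k - i)) = 0 ∧
          ∀ i, i ≤ k → k - d < i → a i * b (k - i) = 0 := by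
        intro d
        induction d with
        | zero =>
            intro _
            exact ⟨by simpa using hcoeff, fun i h1 h2 => absurd h2 (by omega)⟩
        | succ d ihd =>
            intro hd
            obtain ⟨hT, hkilled⟩ := ihd (by omega)
            obtain ⟨hnew, hT'⟩ := step (k - d) (by omega) hT
            constructor
            · have heq : k - (d + 1) + 1 = k - d := by omega
              rw [heq]
              exact hT'
            · intro i h1 h2
              rcases Nat.lt_or_ge (k - d) i with h | h
              · exact hkilled i h1 h
              · have heq : i = k - d := by omega
                rw [heq]
                exact hnew
      intro i j hij
      rcases Nat.eq_zero_or_pos i with rfl | hi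
      · have h := (desc k (le_refl k)).1
        have heq : k - k + 1 = 1 := by omega
        rw [heq, Finset.sum_range_one] at h
        have hj : k - 0 = j := by omega
        rwa [hj] at h
      · have h := (desc k (le_refl k)).2 i (by omega) (by omega)
        have hj : k - i = j := by omega
        rwa [hj] at h
  exact main (i + j) i j rfl

end Reduced

end Aux

/-- Every semicommutative ring (`a b = 0` implies `a R b = 0`) is almost Armendariz. -/
theorem almostArmendariz_of_semicommutative {R : Type*} [Ring R]
    (hsc : ∀ a b : R, a * b = 0 → ∀ r : R, a * r * b = 0) :
    IsAlmostArmendariz R := by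
  intro f g hfg i j
  set c := (nilTwoSidedIdeal hsc).ringCon with hc
  haveI : IsReduced c.Quotient := nil_quotient_reduced hsc
  set π : R →+* c.Quotient := c.mk' with hπ
  have hmap : (f.map π) * (g.map π) = 0 := by
    rw [← Polynomial.map_mul, hfg, Polynomial.map_zero]
  have h0 : π (f.coeff i) * π (g.coeff j) = 0 := by
    have := reduced_armendariz (f.map π) (g.map π) hmap i j
    simpa [Polynomial.coeff_map] using this
  have h1 : π (f.coeff i * g.coeff j) = 0 := by rw [map_mul]; exact h0
  have h2 : c (f.coeff i * g.coeff j) 0 := by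
    apply c.eq.mp
    exact h1
  have h3 : IsNilpotent (f.coeff i * g.coeff j) :=
    (mem_nilTwoSidedIdeal hsc _).mp ((TwoSidedIdeal.mem_iff _ _).mpr h2)
  obtain ⟨n, hn⟩ := h3
  exact aux_strongly_nilpotent hsc hn
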